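/- No aggregation rule is both a social welfare maximizer and stable: there is no rule R such that for every event list E the solution induced by R(E) maximizes community satisfaction with respect to the stance of E, and R is stable. -/

import Mathlib

open Finset

/-- A vote value: `-1`, `0`, or `1`. -/
abbrev EventVal : Type := {v : ℤ // v = -1 ∨ v = 0 ∨ v = 1}

/-- An event: an agent, a paragraph, and a vote value. -/
abbrev Event (A : Type) (k : ℕ) : Type := A × Fin k × EventVal

/-- The stance of agent `a` on paragraph `p` under event list `E`: the value of the last
event of `a` on `p`, or `0` if there is none. -/
def stance {A : Type} [DecidableEq A] {k : ℕ} (E : List (Event A k)) (a : A) (p : Fin k) : ℤ :=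
  E.foldl (fun s e => if e.1 = a ∧ e.2.1 = p then e.2.2.1 else s) 0

/-- Number of paragraphs with nonzero stance of agent `a` under `E`. -/
def Nev {A : Type} [Fintype A] [DecidableEq A] {k : ℕ} (E : List (Event A k)) (a : A) : ℕ :=
  (Finset.univ.filter (fun p : Fin k => stance E a p ≠ 0)).card

/-- Relative approval of paragraph `p` under event list `E`. -/
noncomputable def relAppE {A : Type} [Fintype A] [DecidableEq A] {k : ℕ}
    (E : List (Event A k)) (p : Fin k) : ℝ :=
  ∑ a ∈ Finset.univ.filter (fun a : A => stance E a p = 1), (1 : ℝ) / (Nev E a)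

/-- Relative disapproval of paragraph `p` under event list `E`. -/
noncomputable def relDisE {A : Type} [Fintype A] [DecidableEq A] {k : ℕ}
    (E : List (Event A k)) (p : Fin k) : ℝ :=
  ∑ a ∈ Finset.univ.filter (fun a : A => stance E a p = -1), (1 : ℝ) / (Nev E a)

/-- An aggregation rule is stable if every event list admits an extension after which the
output never changes. -/
def Stable {A : Type} {k : ℕ} (R : List (Event A k) → Finset (Fin k)) : Prop :=
  ∀ E : List (Event A k), ∃ E' : List (Event A k),
    ∀ E'' : List (Event A k), R (E ++ E') = R (E ++ E' ++ E'')

/-- Community satisfaction of a solution `S` with respect to the stance of event list `E`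
(summing over agents who voted on at least one paragraph). -/
noncomputable def SatE {A : Type} [Fintype A] [DecidableEq A] {k : ℕ}
    (E : List (Event A k)) (S : Fin k → ℤ) : ℝ :=
  ∑ a ∈ Finset.univ.filter (fun a : A => 1 ≤ Nev E a),
    ∑ p : Fin k, if stance E a p = S p then (1 : ℝ) / (Nev E a) else 0


/-- Event list where all agents vote `v` on all paragraphs. -/
noncomputable def allEv (A : Type) [Fintype A] (k : ℕ) (v : EventVal) : List (Event A k) :=
  (List.finRange k).flatMap (fun p => (Finset.univ.toList (α := A)).map (fun a => (a, p, v)))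

lemma foldl_no_match {A : Type} [DecidableEq A] {k : ℕ} (a : A) (p : Fin k)
    (L : List (Event A k)) (h : ∀ e ∈ L, ¬ (e.1 = a ∧ e.2.1 = p)) (s : ℤ) :
    L.foldl (fun s e => if e.1 = a ∧ e.2.1 = p then e.2.2.1 else s) s = s := by
  induction L generalizing s with
  | nil => rfl
  | cons e t ih =>
    simp only [List.foldl_cons, if_neg (h e (by simp))]
    exact ih (fun e' he' => h e' (by simp [he'])) s

lemma foldl_const_val {A : Type} [DecidableEq A] {k : ℕ} (a : A) (p : Fin k)
    (v : ℤ) (L : List (Event A k))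
    (hmem : ∃ e ∈ L, e.1 = a ∧ e.2.1 = p)
    (hval : ∀ e ∈ L, (e.2.2 : ℤ) = v) (s : ℤ) :
    L.foldl (fun s e => if e.1 = a ∧ e.2.1 = p then e.2.2.1 else s) s = v := by
  induction L generalizing s with
  | nil => simp at hmem
  | cons e t ih =>
    by_cases ht : ∃ e' ∈ t, e'.1 = a ∧ e'.2.1 = p
    · simp only [List.foldl_cons]
      exact ih ht (fun e' he' => hval e' (by simp [he'])) _
    · obtain ⟨e', he', hmatch⟩ := hmem
      rcases List.mem_cons.1 he' with rfl | h'
      · simp only [List.foldl_cons, if_pos hmatch]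
        rw [foldl_no_match a p t (fun e' he' hc => ht ⟨e', he', hc⟩)]
        exact hval e' (by simp)
      · exact absurd ⟨e', h', hmatch⟩ ht

lemma stance_append_allEv {A : Type} [Fintype A] [DecidableEq A] {k : ℕ}
    (E : List (Event A k)) (v : EventVal) (a : A) (p : Fin k) :
    stance (E ++ allEv A k v) a p = v := by
  unfold stance
  rw [List.foldl_append]
  apply foldl_const_val
  · exact ⟨(a, p, v), by simp [allEv, List.mem_flatMap], rfl, rfl⟩
  · intro e he
    simp only [allEv, List.mem_flatMap, List.mem_map] at he
    obtain ⟨p', _, a', _, rfl⟩ := he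
    rfl

lemma satE_const {A : Type} [Fintype A] [DecidableEq A] {k : ℕ} (hk : 1 ≤ k)
    (E : List (Event A k)) (v : ℤ) (hv : v ≠ 0) (hst : ∀ a p, stance E a p = v)
    (S : Fin k → ℤ) :
    SatE E S = (Fintype.card A : ℝ) * (univ.filter (fun p => S p = v)).card / k := by
  have hN : ∀ a : A, Nev E a = k := by
    intro a
    unfold Nev
    rw [Finset.filter_true_of_mem (fun p _ => by rw [hst]; exact hv)]
    simp
  unfold SatE
  rw [Finset.filter_true_of_mem (fun a _ => by rw [hN]; exact hk)]
  have : ∀ a : A, (∑ p : Fin k, if stance E a p = S p then (1 : ℝ) / (Nev E a) else 0)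
      = (univ.filter (fun p => S p = v)).card / k := by
    intro a
    rw [Finset.sum_ite, Finset.sum_const_zero, add_zero, Finset.sum_const, hN]
    have hfe : (univ.filter (fun x => stance E a x = S x)) = (univ.filter (fun p => S p = v)) := by
      apply Finset.filter_congr
      intro p _
      rw [hst]
      exact ⟨fun h => by simp [← h], fun h => by simp [h]⟩
    rw [hfe, nsmul_eq_mul]
    ring
  rw [Finset.sum_congr rfl (fun a _ => this a), Finset.sum_const, Finset.card_univ, nsmul_eq_mul]
  ring

lemma filter_ite_one {k : ℕ} (R : Finset (Fin k)) :
    univ.filter (fun p => (if p ∈ R then (1:ℤ) else -1) = 1) = R := by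
  ext p
  by_cases h : p ∈ R <;> simp [h]

lemma filter_ite_negone {k : ℕ} (R : Finset (Fin k)) :
    univ.filter (fun p => (if p ∈ R then (1:ℤ) else -1) = -1) = Rᶜ := by
  ext p
  by_cases h : p ∈ R <;> simp [h]

/-- No aggregation rule is both a social welfare maximizer and stable. -/
theorem no_rule_is_swm_and_stable {A : Type} [Fintype A] [DecidableEq A] [Nonempty A]
    {k : ℕ} (hk : 1 ≤ k) :
    ¬ ∃ R : List (Event A k) → Finset (Fin k),
      (∀ (E : List (Event A k)) (S : Fin k → ℤ), (∀ p, S p = -1 ∨ S p = 1) →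
        SatE E S ≤ SatE E (fun p => if p ∈ R E then 1 else -1)) ∧
      Stable R := by
  rintro ⟨R, hswm, hstab⟩
  obtain ⟨E', hE'⟩ := hstab []
  simp only [List.nil_append] at hE'
  have hkpos : (0:ℝ) < k := by exact_mod_cast hk
  have hApos : (0:ℝ) < Fintype.card A := by exact_mod_cast Fintype.card_pos
  have key : ∀ (v : EventVal), (v : ℤ) ≠ 0 →
      (k : ℕ) ≤ (univ.filter (fun p =>
        (if p ∈ R (E' ++ allEv A k v) then (1:ℤ) else -1) = (v : ℤ))).card := by
    intro v hv
    set E1 := E' ++ allEv A k v with hE1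
    have hst : ∀ a p, stance E1 a p = (v : ℤ) := fun a p => stance_append_allEv E' v a p
    have h1 := hswm E1 (fun _ => (v : ℤ)) (fun p => by rcases v.2 with h|h|h <;> simp_all)
    rw [satE_const hk E1 (v:ℤ) hv hst, satE_const hk E1 (v:ℤ) hv hst] at h1
    have hl : (univ.filter (fun _ : Fin k => (v:ℤ) = (v:ℤ))).card = k := by simp
    rw [hl] at h1
    rw [div_le_div_iff_of_pos_right hkpos] at h1
    have h2 := (mul_le_mul_iff_right₀ hApos).mp h1
    exact_mod_cast h2
  have key1 := key ⟨1, Or.inr (Or.inr rfl)⟩ (by norm_num)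
  have keym := key ⟨-1, Or.inl rfl⟩ (by norm_num)
  rw [filter_ite_one] at key1
  rw [filter_ite_negone] at keym
  rw [Finset.card_compl, Fintype.card_fin] at keym
  have h1 : R (E' ++ allEv A k ⟨1, Or.inr (Or.inr rfl)⟩) = univ :=
    Finset.eq_univ_of_card _ (by
      have := Finset.card_le_univ (R (E' ++ allEv A k ⟨1, Or.inr (Or.inr rfl)⟩))
      rw [Fintype.card_fin] at this ⊢; omega)
  have h2 : R (E' ++ allEv A k ⟨-1, Or.inl rfl⟩) = ∅ :=
    Finset.card_eq_zero.mp (by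
      have := Finset.card_le_univ (R (E' ++ allEv A k ⟨-1, Or.inl rfl⟩))
      rw [Fintype.card_fin] at this; omega)
  have e1 := hE' (allEv A k ⟨1, Or.inr (Or.inr rfl)⟩)
  have e2 := hE' (allEv A k ⟨-1, Or.inl rfl⟩)
  rw [h1] at e1
  rw [h2] at e2
  have heq : (univ : Finset (Fin k)) = ∅ := e1.symm.trans e2
  have hmem := Finset.mem_univ (⟨0, hk⟩ : Fin k)
  rw [heq] at hmem
  exact absurd hmem (Finset.notMem_empty _)
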